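/- arXiv:2008.12913 — 8 statements merged into one kernel-verified Lean document; each statement's English description precedes it below -/
import Mathlib

section
/- Let R be a commutative ring and let X, Y be elements of SL(2, R). Then the Fricke identity holds: Tr(X)² + Tr(XY)² + Tr(Y)² = Tr(X)·Tr(XY)·Tr(Y) + Tr(X·Y·X⁻¹·Y⁻¹) + 2. -/
open Matrix

/-- **Fricke identity** in `SL(2, R)` over a commutative ring `R`:
`Tr(X)² + Tr(XY)² + Tr(Y)² = Tr(X)·Tr(XY)·Tr(Y) + Tr(X·Y·X⁻¹·Y⁻¹) + 2`. -/
theorem fricke_identity {R : Type*} [CommRing R]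
    (X Y : Matrix.SpecialLinearGroup (Fin 2) R) :
    (trace (X : Matrix (Fin 2) (Fin 2) R)) ^ 2 +
      (trace ((X * Y : Matrix.SpecialLinearGroup (Fin 2) R) : Matrix (Fin 2) (Fin 2) R)) ^ 2 +
      (trace (Y : Matrix (Fin 2) (Fin 2) R)) ^ 2 =
    trace (X : Matrix (Fin 2) (Fin 2) R) *
        trace ((X * Y : Matrix.SpecialLinearGroup (Fin 2) R) : Matrix (Fin 2) (Fin 2) R) *
        trace (Y : Matrix (Fin 2) (Fin 2) R) +
      trace ((X * Y * X⁻¹ * Y⁻¹ : Matrix.SpecialLinearGroup (Fin 2) R) :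
        Matrix (Fin 2) (Fin 2) R) + 2 := by
  have hX : det (X : Matrix (Fin 2) (Fin 2) R) = 1 := X.2
  have hY : det (Y : Matrix (Fin 2) (Fin 2) R) = 1 := Y.2
  rw [det_fin_two] at hX hY
  simp only [Matrix.SpecialLinearGroup.coe_mul, Matrix.SpecialLinearGroup.coe_inv,
    trace_fin_two, Matrix.mul_apply, Fin.sum_univ_two, adjugate_fin_two, Matrix.of_apply,
    Matrix.cons_val', Matrix.cons_val_zero, Matrix.cons_val_one, Matrix.head_cons,
    Matrix.empty_val', Matrix.cons_val_fin_one, Matrix.head_fin_const]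
  linear_combination (2 - 2 * ((Y : Matrix (Fin 2) (Fin 2) R) 0 0 * Y 1 1)
      - ((Y : Matrix (Fin 2) (Fin 2) R) 0 0 ^ 2 + (Y : Matrix (Fin 2) (Fin 2) R) 1 1 ^ 2)) * hX
    + (-2 * ((X : Matrix (Fin 2) (Fin 2) R) 0 1 * X 1 0)
      - ((X : Matrix (Fin 2) (Fin 2) R) 0 0 ^ 2 + (X : Matrix (Fin 2) (Fin 2) R) 1 1 ^ 2)) * hY
end

section
/- In SL(2, ℤ[q,q⁻¹]), the matrices A_q and B_q satisfy Tr(A_q·B_q·A_q⁻¹·B_q⁻¹) + 2 = −(q−1)²·(1+q+q²)²·q⁻³. -/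
open Matrix LaurentPolynomial

/-- `q` as an element of the Laurent polynomial ring `ℤ[q,q⁻¹]`. -/
noncomputable abbrev q : LaurentPolynomial ℤ := T 1

/-- `q⁻¹` as an element of the Laurent polynomial ring `ℤ[q,q⁻¹]`. -/
noncomputable abbrev qinv : LaurentPolynomial ℤ := T (-1)

lemma q_mul_qinv : q * qinv = 1 := by rw [← T_add]; norm_num

/-- The matrix `A_q = [[q+1, q⁻¹], [1, q⁻¹]]` in `SL(2, ℤ[q,q⁻¹])`. -/
noncomputable def Aq : Matrix.SpecialLinearGroup (Fin 2) (LaurentPolynomial ℤ) :=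
  ⟨!![q + 1, qinv; 1, qinv], by
    rw [Matrix.det_fin_two_of]
    linear_combination q_mul_qinv⟩

/-- The matrix `B_q = [[(q³+q²+2q+1)·q⁻¹, (q+1)·q⁻²], [(q+1)·q⁻¹, q⁻²]]`
in `SL(2, ℤ[q,q⁻¹])`. -/
noncomputable def Bq : Matrix.SpecialLinearGroup (Fin 2) (LaurentPolynomial ℤ) :=
  ⟨!![(q ^ 3 + q ^ 2 + 2 * q + 1) * qinv, (q + 1) * qinv ^ 2;
      (q + 1) * qinv, qinv ^ 2], by
    rw [Matrix.det_fin_two_of]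
    linear_combination (q ^ 2 * qinv ^ 2 + q * qinv + 1) * q_mul_qinv⟩

/-- `Tr(A_q·B_q·A_q⁻¹·B_q⁻¹) + 2 = −(q−1)²·(1+q+q²)²·q⁻³` in `ℤ[q,q⁻¹]`. -/
theorem trace_commutator_AqBq :
    trace ((Aq * Bq * Aq⁻¹ * Bq⁻¹ :
        Matrix.SpecialLinearGroup (Fin 2) (LaurentPolynomial ℤ)) :
        Matrix (Fin 2) (Fin 2) (LaurentPolynomial ℤ)) + 2 =
      -((q - 1) ^ 2 * (1 + q + q ^ 2) ^ 2 * qinv ^ 3) := by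
  simp only [Matrix.SpecialLinearGroup.coe_mul, Matrix.SpecialLinearGroup.coe_inv]
  simp only [Matrix.SpecialLinearGroup.coe_mul, Matrix.SpecialLinearGroup.coe_inv, Aq, Bq,
    Matrix.adjugate_fin_two_of, Matrix.trace_fin_two, Matrix.mul_apply, Fin.sum_univ_two,
    Matrix.cons_val', Matrix.cons_val_zero, Matrix.cons_val_one, Matrix.head_cons,
    Matrix.of_apply, Matrix.empty_val', Matrix.cons_val_fin_one, Matrix.head_fin_const]
  linear_combination ((-2 : LaurentPolynomial ℤ) - qinv ^ 3 - 2 * q * qinv - q * qinv ^ 4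
    - 2 * q ^ 2 * qinv ^ 2) * q_mul_qinv
end

section
/- For every triple (M, L, N) in the q-Cohn tree 𝒯_q one has Tr(M·N·M⁻¹·N⁻¹) + 2 = −(q−1)²·(1+q+q²)²·q⁻³ in ℤ[q,q⁻¹]. -/
open Matrix LaurentPolynomial

/-- The `q`-Cohn tree `𝒯_q`: the smallest set of triples of matrices in
`SL(2, ℤ[q,q⁻¹])` containing `(A_q, A_q·B_q, B_q)` and closed under the two moves
`(M, L, N) ↦ (M, M·L, L)` and `(M, L, N) ↦ (L, L·N, N)`. -/
inductive qCohnTree :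
    Matrix.SpecialLinearGroup (Fin 2) (LaurentPolynomial ℤ) →
    Matrix.SpecialLinearGroup (Fin 2) (LaurentPolynomial ℤ) →
    Matrix.SpecialLinearGroup (Fin 2) (LaurentPolynomial ℤ) → Prop
  | seed : qCohnTree Aq (Aq * Bq) Bq
  | left {M L N} : qCohnTree M L N → qCohnTree M (M * L) L
  | right {M L N} : qCohnTree M L N → qCohnTree L (L * N) N


lemma qCohnTree_middle {M L N} (h : qCohnTree M L N) : L = M * N := by
  induction h with
  | seed => rfl
  | left h ih => rw [ih]
  | right h ih => rw [ih]

lemma trace_conj (M X : Matrix.SpecialLinearGroup (Fin 2) (LaurentPolynomial ℤ)) :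
    trace ((M * X * M⁻¹ : Matrix.SpecialLinearGroup (Fin 2) (LaurentPolynomial ℤ)) :
      Matrix (Fin 2) (Fin 2) (LaurentPolynomial ℤ)) =
    trace ((X : Matrix.SpecialLinearGroup (Fin 2) (LaurentPolynomial ℤ)) :
      Matrix (Fin 2) (Fin 2) (LaurentPolynomial ℤ)) := by
  rw [Matrix.SpecialLinearGroup.coe_mul, Matrix.SpecialLinearGroup.coe_mul,
    Matrix.trace_mul_comm, ← Matrix.mul_assoc, ← Matrix.SpecialLinearGroup.coe_mul,
    ← Matrix.SpecialLinearGroup.coe_mul, inv_mul_cancel, one_mul]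

/-- For every triple `(M, L, N)` in the `q`-Cohn tree,
`Tr(M·N·M⁻¹·N⁻¹) + 2 = −(q−1)²·(1+q+q²)²·q⁻³` in `ℤ[q,q⁻¹]`. -/
theorem trace_commutator_qCohnTree
    (M L N : Matrix.SpecialLinearGroup (Fin 2) (LaurentPolynomial ℤ))
    (h : qCohnTree M L N) :
    trace ((M * N * M⁻¹ * N⁻¹ :
        Matrix.SpecialLinearGroup (Fin 2) (LaurentPolynomial ℤ)) :
        Matrix (Fin 2) (Fin 2) (LaurentPolynomial ℤ)) + 2 =
      -((q - 1) ^ 2 * (1 + q + q ^ 2) ^ 2 * qinv ^ 3) := by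
 induction h with
  | seed =>
      show trace ((Aq * Bq * Aq⁻¹ * Bq⁻¹ :
        Matrix.SpecialLinearGroup (Fin 2) (LaurentPolynomial ℤ)) :
        Matrix (Fin 2) (Fin 2) (LaurentPolynomial ℤ)) + 2 = _
      rw [Matrix.SpecialLinearGroup.coe_mul, Matrix.SpecialLinearGroup.coe_mul,
        Matrix.SpecialLinearGroup.coe_mul, Matrix.SpecialLinearGroup.coe_inv,
        Matrix.SpecialLinearGroup.coe_inv]
      show trace ((Aq : Matrix (Fin 2) (Fin 2) (LaurentPolynomial ℤ)) *
        (Bq : Matrix (Fin 2) (Fin 2) (LaurentPolynomial ℤ)) *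
        (Aq : Matrix (Fin 2) (Fin 2) (LaurentPolynomial ℤ)).adjugate *
        (Bq : Matrix (Fin 2) (Fin 2) (LaurentPolynomial ℤ)).adjugate) + 2 = _
      rw [show (Aq : Matrix (Fin 2) (Fin 2) (LaurentPolynomial ℤ)) =
        !![q + 1, qinv; 1, qinv] from rfl,
        show (Bq : Matrix (Fin 2) (Fin 2) (LaurentPolynomial ℤ)) =
        !![(q ^ 3 + q ^ 2 + 2 * q + 1) * qinv, (q + 1) * qinv ^ 2;
          (q + 1) * qinv, qinv ^ 2] from rfl]
      simp only [Matrix.adjugate_fin_two_of]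
      rw [Matrix.mul_fin_two, Matrix.mul_fin_two, Matrix.mul_fin_two,
        Matrix.trace_fin_two_of]
      have h := q_mul_qinv
      linear_combination (-(2 : LaurentPolynomial ℤ) - qinv^3 - 2*q*qinv - q*qinv^4 - 2*q^2*qinv^2) * h
  | @left M L N h ih =>
      have hm : L = M * N := qCohnTree_middle h
      have : (M * L * M⁻¹ * L⁻¹ :
          Matrix.SpecialLinearGroup (Fin 2) (LaurentPolynomial ℤ)) =
          M * (M * N * M⁻¹ * N⁻¹) * M⁻¹ := by rw [hm]; group
      rw [this, _root_.trace_conj]; exact ih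
  | @right M L N h ih =>
      have hm : L = M * N := qCohnTree_middle h
      have : (L * N * L⁻¹ * N⁻¹ :
          Matrix.SpecialLinearGroup (Fin 2) (LaurentPolynomial ℤ)) =
          M * N * M⁻¹ * N⁻¹ := by rw [hm]; group
      rw [this]; exact ih
end

section
/- For every triple (M, L, N) in the q-Cohn tree 𝒯_q, each of the traces Tr(M), Tr(L), Tr(N) is divisible by [3]_q = 1+q+q² in the ring ℤ[q,q⁻¹]. -/
open Matrix LaurentPolynomial

/-- Fricke-type identity: `Tr(A²B) = Tr A · Tr(AB) − det A · Tr B` for 2×2 matrices. -/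
lemma trace_sq_mul {R : Type*} [CommRing R] (A B : Matrix (Fin 2) (Fin 2) R) :
    trace (A * (A * B)) = trace A * trace (A * B) - det A * trace B := by
  simp [Matrix.trace_fin_two, Matrix.mul_apply, Fin.sum_univ_two, Matrix.det_fin_two]
  ring

/-- Fricke-type identity: `Tr(AB²) = Tr(AB) · Tr B − det B · Tr A` for 2×2 matrices. -/
lemma trace_mul_sq {R : Type*} [CommRing R] (A B : Matrix (Fin 2) (Fin 2) R) :
    trace ((A * B) * B) = trace (A * B) * trace B - det B * trace A := by
  simp [Matrix.trace_fin_two, Matrix.mul_apply, Fin.sum_univ_two, Matrix.det_fin_two]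
  ring

lemma threeq_dvd_trace_Aq : (1 + q + q ^ 2) ∣ trace (Aq : Matrix (Fin 2) (Fin 2) (LaurentPolynomial ℤ)) := by
  refine ⟨qinv, ?_⟩
  simp only [Aq, Matrix.trace_fin_two_of]
  linear_combination (-1 - q) * q_mul_qinv

lemma threeq_dvd_trace_Bq : (1 + q + q ^ 2) ∣ trace (Bq : Matrix (Fin 2) (Fin 2) (LaurentPolynomial ℤ)) := by
  refine ⟨1 + qinv ^ 2, ?_⟩
  simp only [Bq, Matrix.trace_fin_two_of]
  linear_combination (q ^ 2 - q * qinv + q - qinv + 1) * q_mul_qinv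

lemma threeq_dvd_trace_AqBq :
    (1 + q + q ^ 2) ∣ trace ((Aq * Bq : Matrix.SpecialLinearGroup (Fin 2) (LaurentPolynomial ℤ)) : Matrix (Fin 2) (Fin 2) (LaurentPolynomial ℤ)) := by
  rw [Matrix.SpecialLinearGroup.coe_mul]
  show (1 + q + q ^ 2) ∣ trace ((Aq : Matrix (Fin 2) (Fin 2) (LaurentPolynomial ℤ)) * (Bq : Matrix (Fin 2) (Fin 2) (LaurentPolynomial ℤ)))
  refine ⟨q + 1 + qinv + qinv ^ 2 + qinv ^ 3, ?_⟩
  simp only [Aq, Bq, Matrix.mul_fin_two, Matrix.trace_fin_two_of]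
  linear_combination (q ^ 3 + 2 * q ^ 2 - q * qinv ^ 2 - q * qinv + 2 * q - qinv ^ 2 + 1)
    * q_mul_qinv

/-- Strengthened invariant: traces divisible and `L = M·N`. -/
lemma key (M L N : Matrix.SpecialLinearGroup (Fin 2) (LaurentPolynomial ℤ))
    (h : qCohnTree M L N) :
    ((1 + q + q ^ 2) ∣ trace (M : Matrix (Fin 2) (Fin 2) (LaurentPolynomial ℤ)) ∧
     (1 + q + q ^ 2) ∣ trace (L : Matrix (Fin 2) (Fin 2) (LaurentPolynomial ℤ)) ∧
     (1 + q + q ^ 2) ∣ trace (N : Matrix (Fin 2) (Fin 2) (LaurentPolynomial ℤ))) ∧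
    L = M * N := by
  induction h with
  | seed => exact ⟨⟨threeq_dvd_trace_Aq, threeq_dvd_trace_AqBq, threeq_dvd_trace_Bq⟩, rfl⟩
  | left h ih =>
    obtain ⟨⟨hM, hL, hN⟩, rfl⟩ := ih
    refine ⟨⟨hM, ?_, hL⟩, rfl⟩
    rw [Matrix.SpecialLinearGroup.coe_mul, Matrix.SpecialLinearGroup.coe_mul,
      trace_sq_mul, Matrix.SpecialLinearGroup.det_coe, one_mul]
    rw [← Matrix.SpecialLinearGroup.coe_mul]
    exact dvd_sub (hL.mul_left _) hN
  | right h ih =>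
    obtain ⟨⟨hM, hL, hN⟩, rfl⟩ := ih
    refine ⟨⟨hL, ?_, hN⟩, rfl⟩
    rw [Matrix.SpecialLinearGroup.coe_mul, Matrix.SpecialLinearGroup.coe_mul,
      trace_mul_sq, Matrix.SpecialLinearGroup.det_coe, one_mul]
    rw [← Matrix.SpecialLinearGroup.coe_mul]
    exact dvd_sub (hL.mul_right _) hM

/-- For every triple `(M, L, N)` in the `q`-Cohn tree, each of the traces
`Tr(M)`, `Tr(L)`, `Tr(N)` is divisible by `[3]_q = 1 + q + q²` in `ℤ[q,q⁻¹]`. -/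
theorem threeq_dvd_trace_qCohnTree
    (M L N : Matrix.SpecialLinearGroup (Fin 2) (LaurentPolynomial ℤ))
    (h : qCohnTree M L N) :
    (1 + q + q ^ 2) ∣ trace (M : Matrix (Fin 2) (Fin 2) (LaurentPolynomial ℤ)) ∧
    (1 + q + q ^ 2) ∣ trace (L : Matrix (Fin 2) (Fin 2) (LaurentPolynomial ℤ)) ∧
    (1 + q + q ^ 2) ∣ trace (N : Matrix (Fin 2) (Fin 2) (LaurentPolynomial ℤ)) := by
  exact (key M L N h).1
end

section
/- For every triple (M, L, N) in the q-Cohn tree 𝒯_q there exist Laurent polynomials x, y, z ∈ ℤ[q,q⁻¹] with Tr(M) = [3]_q·x, Tr(L) = [3]_q·y, Tr(N) = [3]_q·z, and this triple (x, y, z) satisfies the q-deformed Markov equation x² + y² + z² + (q−1)²·q⁻³ = [3]_q·x·y·z. -/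
open Matrix LaurentPolynomial

/-- Trace identity `Tr(A·A·B) = Tr(A)·Tr(A·B) − det(A)·Tr(B)` for 2×2 matrices. -/
lemma trace_AAB {R : Type*} [CommRing R] (A B : Matrix (Fin 2) (Fin 2) R) :
    trace (A * A * B) = trace A * trace (A * B) - A.det * trace B := by
  simp only [Matrix.trace_fin_two, Matrix.mul_apply, Matrix.det_fin_two,
    Fin.sum_univ_two]
  ring

/-- Trace identity `Tr(A·B·B) = Tr(A·B)·Tr(B) − det(B)·Tr(A)` for 2×2 matrices. -/
lemma trace_ABB {R : Type*} [CommRing R] (A B : Matrix (Fin 2) (Fin 2) R) :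
    trace (A * B * B) = trace (A * B) * trace B - B.det * trace A := by
  simp only [Matrix.trace_fin_two, Matrix.mul_apply, Matrix.det_fin_two,
    Fin.sum_univ_two]
  ring

/-- Strengthened induction: the middle matrix is the product of the outer two,
and the normalized traces satisfy the `q`-Markov equation. -/
lemma qMarkov_aux
    (M L N : Matrix.SpecialLinearGroup (Fin 2) (LaurentPolynomial ℤ))
    (h : qCohnTree M L N) :
    L = M * N ∧
    ∃ x y z : LaurentPolynomial ℤ,
      trace (M : Matrix (Fin 2) (Fin 2) (LaurentPolynomial ℤ)) = (1 + q + q ^ 2) * x ∧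
      trace (L : Matrix (Fin 2) (Fin 2) (LaurentPolynomial ℤ)) = (1 + q + q ^ 2) * y ∧
      trace (N : Matrix (Fin 2) (Fin 2) (LaurentPolynomial ℤ)) = (1 + q + q ^ 2) * z ∧
      x ^ 2 + y ^ 2 + z ^ 2 + (q - 1) ^ 2 * qinv ^ 3 = (1 + q + q ^ 2) * x * y * z := by
  induction h with
  | seed =>
    refine ⟨rfl, qinv, (q ^ 4 + q ^ 3 + q ^ 2 + q + 1) * qinv ^ 3,
      (q ^ 2 + 1) * qinv ^ 2, ?_, ?_, ?_, ?_⟩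
    · show trace (Aq : Matrix (Fin 2) (Fin 2) (LaurentPolynomial ℤ)) = _
      simp only [Aq, Matrix.trace_fin_two_of]
      linear_combination (-1 - q) * q_mul_qinv
    · show trace ((Aq * Bq : Matrix.SpecialLinearGroup (Fin 2) (LaurentPolynomial ℤ)) :
        Matrix (Fin 2) (Fin 2) (LaurentPolynomial ℤ)) = _
      rw [Matrix.SpecialLinearGroup.coe_mul]
      simp only [Aq, Bq, Matrix.trace_fin_two, Matrix.mul_apply, Fin.sum_univ_two,
        Matrix.of_apply, Matrix.cons_val', Matrix.cons_val_zero, Matrix.cons_val_one,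
        Matrix.head_cons, Matrix.head_fin_const, Matrix.empty_val',
        Matrix.cons_val_fin_one]
      linear_combination ((-1) * qinv + (-2) * qinv ^ 2 + (-3) * q * qinv
        + (-3) * q * qinv ^ 2 + (-3) * q ^ 2 * qinv + (-3) * q ^ 2 * qinv ^ 2
        + (-2) * q ^ 3 * qinv + (-3) * q ^ 3 * qinv ^ 2 + (-1) * q ^ 4 * qinv
        + (-2) * q ^ 4 * qinv ^ 2 + (-1) * q ^ 5 * qinv ^ 2) * q_mul_qinv
    · show trace (Bq : Matrix (Fin 2) (Fin 2) (LaurentPolynomial ℤ)) = _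
      simp only [Bq, Matrix.trace_fin_two_of]
      linear_combination ((-1) * qinv + (-2) * q * qinv + (-1) * q ^ 2 * qinv
        + (-1) * q ^ 3 * qinv) * q_mul_qinv
    · linear_combination ((-1) * qinv ^ 2 + (-1) * qinv ^ 3 + (-1) * qinv ^ 4
        + q * qinv ^ 3 + (-1) * q * qinv ^ 4 + (-1) * q * qinv ^ 5
        + (-1) * q ^ 2 * qinv ^ 3 + (-1) * q ^ 2 * qinv ^ 4 + (-1) * q ^ 2 * qinv ^ 5
        + (-1) * q ^ 3 * qinv ^ 4 + (-1) * q ^ 3 * qinv ^ 5 + (-1) * q ^ 4 * qinv ^ 4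
        + (-1) * q ^ 4 * qinv ^ 5 + (-1) * q ^ 5 * qinv ^ 5) * q_mul_qinv
  | @left M L N h ih =>
    obtain ⟨hL, x, y, z, hx, hy, hz, hm⟩ := ih
    refine ⟨rfl, x, (1 + q + q ^ 2) * x * y - z, y, hx, ?_, hy, ?_⟩
    · have key : trace ((M * L : Matrix.SpecialLinearGroup (Fin 2) (LaurentPolynomial ℤ)) :
          Matrix (Fin 2) (Fin 2) (LaurentPolynomial ℤ))
          = trace (M : Matrix (Fin 2) (Fin 2) (LaurentPolynomial ℤ))
            * trace ((M : Matrix (Fin 2) (Fin 2) (LaurentPolynomial ℤ)) * (N : Matrix (Fin 2) (Fin 2) (LaurentPolynomial ℤ)))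
            - (M : Matrix (Fin 2) (Fin 2) (LaurentPolynomial ℤ)).det
              * trace (N : Matrix (Fin 2) (Fin 2) (LaurentPolynomial ℤ)) := by
        rw [Matrix.SpecialLinearGroup.coe_mul, hL, Matrix.SpecialLinearGroup.coe_mul,
          ← mul_assoc]
        exact trace_AAB _ _
      rw [key, M.prop]
      have hy' : trace ((M : Matrix (Fin 2) (Fin 2) (LaurentPolynomial ℤ)) * (N : Matrix (Fin 2) (Fin 2) (LaurentPolynomial ℤ)))
          = (1 + q + q ^ 2) * y := by
        rw [← Matrix.SpecialLinearGroup.coe_mul, ← hL]; exact hy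
      rw [hx, hy', hz]
      ring
    · linear_combination hm
  | @right M L N h ih =>
    obtain ⟨hL, x, y, z, hx, hy, hz, hm⟩ := ih
    refine ⟨rfl, y, (1 + q + q ^ 2) * y * z - x, z, hy, ?_, hz, ?_⟩
    · have key : trace ((L * N : Matrix.SpecialLinearGroup (Fin 2) (LaurentPolynomial ℤ)) :
          Matrix (Fin 2) (Fin 2) (LaurentPolynomial ℤ))
          = trace ((M : Matrix (Fin 2) (Fin 2) (LaurentPolynomial ℤ)) * (N : Matrix (Fin 2) (Fin 2) (LaurentPolynomial ℤ)))
            * trace (N : Matrix (Fin 2) (Fin 2) (LaurentPolynomial ℤ))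
            - (N : Matrix (Fin 2) (Fin 2) (LaurentPolynomial ℤ)).det
              * trace (M : Matrix (Fin 2) (Fin 2) (LaurentPolynomial ℤ)) := by
        rw [Matrix.SpecialLinearGroup.coe_mul, hL, Matrix.SpecialLinearGroup.coe_mul]
        exact trace_ABB _ _
      rw [key, N.prop]
      have hy' : trace ((M : Matrix (Fin 2) (Fin 2) (LaurentPolynomial ℤ)) * (N : Matrix (Fin 2) (Fin 2) (LaurentPolynomial ℤ)))
          = (1 + q + q ^ 2) * y := by
        rw [← Matrix.SpecialLinearGroup.coe_mul, ← hL]; exact hy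
      rw [hx, hy', hz]
      ring
    · linear_combination hm

/-- For every triple `(M, L, N)` in the `q`-Cohn tree there exist
`x, y, z ∈ ℤ[q,q⁻¹]` with `Tr(M) = [3]_q·x`, `Tr(L) = [3]_q·y`, `Tr(N) = [3]_q·z`,
and `(x, y, z)` satisfies the `q`-deformed Markov equation
`x² + y² + z² + (q−1)²·q⁻³ = [3]_q·x·y·z`. -/
theorem qMarkov_of_qCohnTree
    (M L N : Matrix.SpecialLinearGroup (Fin 2) (LaurentPolynomial ℤ))
    (h : qCohnTree M L N) :
    ∃ x y z : LaurentPolynomial ℤ,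
      trace (M : Matrix (Fin 2) (Fin 2) (LaurentPolynomial ℤ)) = (1 + q + q ^ 2) * x ∧
      trace (L : Matrix (Fin 2) (Fin 2) (LaurentPolynomial ℤ)) = (1 + q + q ^ 2) * y ∧
      trace (N : Matrix (Fin 2) (Fin 2) (LaurentPolynomial ℤ)) = (1 + q + q ^ 2) * z ∧
      x ^ 2 + y ^ 2 + z ^ 2 + (q - 1) ^ 2 * qinv ^ 3 = (1 + q + q ^ 2) * x * y * z := by
  exact (qMarkov_aux M L N h).2
end

section
/- For every word s ∈ List Bool, let (M, L, N) be the triple of matrices obtained from (A_q, A_q·B_q, B_q) by applying, for each letter of s, the move (M, L, N) ↦ (M, M·L, L) for the letter 0 and the move (M, L, N) ↦ (L, L·N, N) for the letter 1, and let (x, y, z) be the triple of Laurent polynomials obtained from the seed (q⁻¹, (q⁴+q³+q²+q+1)·q⁻³, (q²+1)·q⁻²) by applying, for each corresponding letter of s, the move (x, y, z) ↦ (x, [3]_q·x·y − z, y) for the letter 0 and the move (x, y, z) ↦ (y, [3]_q·y·z − x, z) for the letter 1. Then (Tr M, Tr L, Tr N) = ([3]_q·x, [3]_q·y, [3]_q·z).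 -/
open Matrix LaurentPolynomial

/-- One move on triples of matrices: `false ↦ (M, M·L, L)`, `true ↦ (L, L·N, N)`. -/
noncomputable def matMove (b : Bool)
    (p : Matrix.SpecialLinearGroup (Fin 2) (LaurentPolynomial ℤ) ×
         Matrix.SpecialLinearGroup (Fin 2) (LaurentPolynomial ℤ) ×
         Matrix.SpecialLinearGroup (Fin 2) (LaurentPolynomial ℤ)) :
    Matrix.SpecialLinearGroup (Fin 2) (LaurentPolynomial ℤ) ×
    Matrix.SpecialLinearGroup (Fin 2) (LaurentPolynomial ℤ) ×
    Matrix.SpecialLinearGroup (Fin 2) (LaurentPolynomial ℤ) :=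
  match b, p with
  | false, (M, L, _) => (M, M * L, L)
  | true, (_, L, N) => (L, L * N, N)

/-- One move on triples of Laurent polynomials:
`false ↦ (x, [3]_q·x·y − z, y)`, `true ↦ (y, [3]_q·y·z − x, z)`. -/
noncomputable def polyMove (b : Bool)
    (p : LaurentPolynomial ℤ × LaurentPolynomial ℤ × LaurentPolynomial ℤ) :
    LaurentPolynomial ℤ × LaurentPolynomial ℤ × LaurentPolynomial ℤ :=
  match b, p with
  | false, (x, y, z) => (x, (1 + q + q ^ 2) * x * y - z, y)
  | true, (x, y, z) => (y, (1 + q + q ^ 2) * y * z - x, z)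

section Aux

variable {R : Type*} [CommRing R]

lemma tr_aux1 (M N : Matrix (Fin 2) (Fin 2) R) (h : M.det = 1) :
    trace (M * M * N) = trace M * trace (M * N) - trace N := by
  simp only [Matrix.trace_fin_two, Matrix.mul_apply, Fin.sum_univ_two,
    Matrix.det_fin_two] at *
  linear_combination (-(N 0 0) - N 1 1) * h

lemma tr_aux2 (M N : Matrix (Fin 2) (Fin 2) R) (h : N.det = 1) :
    trace (M * N * N) = trace (M * N) * trace N - trace M := by
  simp only [Matrix.trace_fin_two, Matrix.mul_apply, Fin.sum_univ_two,
    Matrix.det_fin_two] at *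
  linear_combination (-(M 0 0) - M 1 1) * h

end Aux

/-- The invariant carried through the induction. -/
def trInv (P : Matrix.SpecialLinearGroup (Fin 2) (LaurentPolynomial ℤ) ×
    Matrix.SpecialLinearGroup (Fin 2) (LaurentPolynomial ℤ) ×
    Matrix.SpecialLinearGroup (Fin 2) (LaurentPolynomial ℤ))
    (p : LaurentPolynomial ℤ × LaurentPolynomial ℤ × LaurentPolynomial ℤ) : Prop :=
  P.2.1 = P.1 * P.2.2 ∧
  trace (P.1 : Matrix (Fin 2) (Fin 2) (LaurentPolynomial ℤ)) = (1 + q + q ^ 2) * p.1 ∧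
  trace (P.2.1 : Matrix (Fin 2) (Fin 2) (LaurentPolynomial ℤ)) = (1 + q + q ^ 2) * p.2.1 ∧
  trace (P.2.2 : Matrix (Fin 2) (Fin 2) (LaurentPolynomial ℤ)) = (1 + q + q ^ 2) * p.2.2

lemma inv_step (b : Bool) (P) (p) (h : trInv P p) : trInv (matMove b P) (polyMove b p) := by
  obtain ⟨M, L, N⟩ := P
  obtain ⟨x, y, z⟩ := p
  obtain ⟨h1, h2, h3, h4⟩ := h
  dsimp only [trInv] at h1 h2 h3 h4
  subst h1
  cases b with
  | false =>
      refine ⟨rfl, h2, ?_, h3⟩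
      show trace ((↑(M * (M * N)) : Matrix (Fin 2) (Fin 2) (LaurentPolynomial ℤ))) = _
      rw [Matrix.SpecialLinearGroup.coe_mul, Matrix.SpecialLinearGroup.coe_mul,
        ← mul_assoc, tr_aux1 _ _ M.2, ← Matrix.SpecialLinearGroup.coe_mul, h2, h3, h4]
      dsimp only [polyMove]
      ring
  | true =>
      refine ⟨rfl, h3, ?_, h4⟩
      show trace ((↑(M * N * N) : Matrix (Fin 2) (Fin 2) (LaurentPolynomial ℤ))) = _
      rw [Matrix.SpecialLinearGroup.coe_mul, Matrix.SpecialLinearGroup.coe_mul,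
        tr_aux2 _ _ N.2, ← Matrix.SpecialLinearGroup.coe_mul, h2, h3, h4]
      dsimp only [polyMove]
      ring

lemma inv_foldl (s : List Bool) (P) (p) (h : trInv P p) :
    trInv (s.foldl (fun p b => matMove b p) P) (s.foldl (fun p b => polyMove b p) p) := by
  induction s generalizing P p with
  | nil => exact h
  | cons b t ih => exact ih _ _ (inv_step b P p h)

/-- For every word `s : List Bool`, the triple of traces of the matrices obtained from
`(A_q, A_q·B_q, B_q)` by the matrix moves along `s` equals `[3]_q` times the triple of
Laurent polynomials obtained from the seed
`(q⁻¹, (q⁴+q³+q²+q+1)·q⁻³, (q²+1)·q⁻²)` by the corresponding polynomial moves. -/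
theorem trace_qCohn_eq_threeq_mul_qMarkov (s : List Bool) :
    (fun P : Matrix.SpecialLinearGroup (Fin 2) (LaurentPolynomial ℤ) ×
        Matrix.SpecialLinearGroup (Fin 2) (LaurentPolynomial ℤ) ×
        Matrix.SpecialLinearGroup (Fin 2) (LaurentPolynomial ℤ) =>
      (trace (P.1 : Matrix (Fin 2) (Fin 2) (LaurentPolynomial ℤ)),
       trace (P.2.1 : Matrix (Fin 2) (Fin 2) (LaurentPolynomial ℤ)),
       trace (P.2.2 : Matrix (Fin 2) (Fin 2) (LaurentPolynomial ℤ))))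
      (s.foldl (fun p b => matMove b p) (Aq, Aq * Bq, Bq)) =
    (fun P : LaurentPolynomial ℤ × LaurentPolynomial ℤ × LaurentPolynomial ℤ =>
      ((1 + q + q ^ 2) * P.1, (1 + q + q ^ 2) * P.2.1, (1 + q + q ^ 2) * P.2.2))
      (s.foldl (fun p b => polyMove b p)
        (qinv, (q ^ 4 + q ^ 3 + q ^ 2 + q + 1) * qinv ^ 3, (q ^ 2 + 1) * qinv ^ 2)) := by
  have hbase : trInv (Aq, Aq * Bq, Bq)
      (qinv, (q ^ 4 + q ^ 3 + q ^ 2 + q + 1) * qinv ^ 3, (q ^ 2 + 1) * qinv ^ 2) := by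
    refine ⟨rfl, ?_, ?_, ?_⟩
    · simp only [Aq, Matrix.SpecialLinearGroup.coe_mk, Matrix.trace_fin_two_of]
      linear_combination (-1 - q) * q_mul_qinv
    · show trace ((Aq : Matrix (Fin 2) (Fin 2) (LaurentPolynomial ℤ)) *
          (Bq : Matrix (Fin 2) (Fin 2) (LaurentPolynomial ℤ))) = _
      simp only [Matrix.SpecialLinearGroup.coe_mul, Aq, Bq,
        Matrix.SpecialLinearGroup.coe_mk, Matrix.trace_fin_two, Matrix.mul_apply,
        Fin.sum_univ_two, Matrix.of_apply, Matrix.cons_val', Matrix.cons_val_zero,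
        Matrix.empty_val', Matrix.cons_val_fin_one, Matrix.cons_val_one,
        Matrix.head_cons, Matrix.head_fin_const]
      linear_combination (-qinv - 2 * qinv ^ 2 - 3 * q * qinv - 3 * q * qinv ^ 2 -
        3 * q ^ 2 * qinv - 3 * q ^ 2 * qinv ^ 2 - 2 * q ^ 3 * qinv - 3 * q ^ 3 * qinv ^ 2 -
        q ^ 4 * qinv - 2 * q ^ 4 * qinv ^ 2 - q ^ 5 * qinv ^ 2) * q_mul_qinv
    · simp only [Bq, Matrix.SpecialLinearGroup.coe_mk, Matrix.trace_fin_two_of]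
      linear_combination (-qinv - 2 * q * qinv - q ^ 2 * qinv - q ^ 3 * qinv) * q_mul_qinv
  obtain ⟨_, h2, h3, h4⟩ := inv_foldl s _ _ hbase
  simp only [h2, h3, h4]
end

section
/- Let 𝒯_t be the smallest subset of ℤ[t]³ containing the seed (1, t² − t − 1, t − 1) and closed under the two moves (x, y, z) ↦ (x, t·x·y − z, y) and (x, y, z) ↦ (y, t·y·z − x, z). Then every triple (f, g, h) ∈ 𝒯_t satisfies the t-deformed Markov equation f² + g² + h² + (t − 3) = t·f·g·h in ℤ[t]. -/
open Polynomial

/-- The castling Markov tree `𝒯_t`: the smallest subset of `ℤ[t]³` containing the seed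
`(1, t² − t − 1, t − 1)` and closed under the moves `(x, y, z) ↦ (x, t·x·y − z, y)` and
`(x, y, z) ↦ (y, t·y·z − x, z)`. -/
inductive CastlingMarkovTree : Polynomial ℤ → Polynomial ℤ → Polynomial ℤ → Prop
  | seed : CastlingMarkovTree 1 (X ^ 2 - X - 1) (X - 1)
  | left {x y z} : CastlingMarkovTree x y z → CastlingMarkovTree x (X * x * y - z) y
  | right {x y z} : CastlingMarkovTree x y z → CastlingMarkovTree y (X * y * z - x) z

/-- Every triple `(f, g, h)` in the castling Markov tree satisfies the `t`-deformed
Markov equation `f² + g² + h² + (t − 3) = t·f·g·h` in `ℤ[t]`. -/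
theorem castlingMarkovTree_solves (f g h : Polynomial ℤ)
    (hfgh : CastlingMarkovTree f g h) :
    f ^ 2 + g ^ 2 + h ^ 2 + (X - 3) = X * f * g * h := by
  induction hfgh with
  | seed => ring
  | left _ ih => linear_combination ih
  | right _ ih => linear_combination ih
end

section
/- Let a, b, c ∈ ℤ[q,q⁻¹]. Then (q·a, q·b, q·c) satisfies the equation X² + Y² + Z² + (q⁻¹·[3]_q − 3) = q⁻¹·[3]_q·X·Y·Z if and only if (a, b, c) satisfies the q-Markov equation x² + y² + z² + (q−1)²·q⁻³ = [3]_q·x·y·z. In particular, the substitution t = q⁻¹·[3]_q and the scaling by q give a one-to-one correspondence between solutions of the t-deformed Markov equation x² + y² + z² + (t − 3) = t·x·y·z at t = q⁻¹·[3]_q and solutions of the q-Markov equation. -/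
open LaurentPolynomial

/-- For `a, b, c ∈ ℤ[q,q⁻¹]`, the triple `(q·a, q·b, q·c)` satisfies the `t`-deformed
Markov equation `X² + Y² + Z² + (q⁻¹·[3]_q − 3) = q⁻¹·[3]_q·X·Y·Z` at `t = q⁻¹·[3]_q`
if and only if `(a, b, c)` satisfies the `q`-Markov equation
`x² + y² + z² + (q−1)²·q⁻³ = [3]_q·x·y·z`. -/
theorem tMarkov_iff_qMarkov (a b c : LaurentPolynomial ℤ) :
    ((q * a) ^ 2 + (q * b) ^ 2 + (q * c) ^ 2 + (qinv * (1 + q + q ^ 2) - 3) =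
        qinv * (1 + q + q ^ 2) * (q * a) * (q * b) * (q * c)) ↔
      (a ^ 2 + b ^ 2 + c ^ 2 + (q - 1) ^ 2 * qinv ^ 3 = (1 + q + q ^ 2) * a * b * c) := by
  have h1 : qinv * q = 1 := by
    rw [← T_add]; norm_num
  have hq : (q : LaurentPolynomial ℤ) ≠ 0 := (isUnit_T 1).ne_zero
  constructor
  · intro h
    apply mul_left_cancel₀ (pow_ne_zero 2 hq)
    linear_combination h + (2 * qinv * (q - 1) ^ 2 - (1 + q)
      + (1 + q + q ^ 2) * a * b * c * q ^ 2
      + qinv * (q - 1) ^ 2 * (qinv * q - 1) + (q - 2)) * h1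
  · intro h
    linear_combination q ^ 2 * h - (2 * qinv * (q - 1) ^ 2 - (1 + q)
      + (1 + q + q ^ 2) * a * b * c * q ^ 2
      + qinv * (q - 1) ^ 2 * (qinv * q - 1) + (q - 2)) * h1
end
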